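/- For every n ≥ 1 and every 2^n × 2^n complex matrix σ with trace 1, one has (1/4^n) · Σ_{a,b ∈ {0,1}^n} (X^a Z^b) σ (X^a Z^b)† = (1/2^n) · I, where I is the 2^n × 2^n identity matrix. (Quantum one-time pad twirl, Eq. (1).) -/

import Mathlib

open Matrix BigOperators

/-- Pauli X gate. -/
noncomputable def Xg : Matrix (Fin 2) (Fin 2) ℂ := !![0, 1; 1, 0]

/-- Pauli Z gate. -/
noncomputable def Zg : Matrix (Fin 2) (Fin 2) ℂ := !![1, 0; 0, -1]

/-- The n-fold Kronecker product `⊗ₖ X^{a_k} Z^{b_k}`, as a matrix indexed by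
functions `Fin n → Fin 2`. -/
noncomputable def XaZb (n : ℕ) (a b : Fin n → Fin 2) :
    Matrix (Fin n → Fin 2) (Fin n → Fin 2) ℂ :=
  Matrix.of fun i j => ∏ k : Fin n, (Xg ^ (a k : ℕ) * Zg ^ (b k : ℕ)) (i k) (j k)


lemma entry2 (a b i j : Fin 2) :
    (Xg ^ (a : ℕ) * Zg ^ (b : ℕ)) i j
      = if i = j + a then (-1 : ℂ) ^ ((b : ℕ) * (j : ℕ)) else 0 := by
  fin_cases a <;> fin_cases b <;> fin_cases i <;> fin_cases j <;>
    simp [Xg, Zg, Matrix.mul_apply, Fin.sum_univ_two, pow_succ, Matrix.one_apply]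

lemma fac (u v : Fin 2) :
    ∑ c : Fin 2, ((-1:ℂ)^((c:ℕ)*(u:ℕ)) * (-1)^((c:ℕ)*(v:ℕ))) = if u = v then 2 else 0 := by
  fin_cases u <;> fin_cases v <;> norm_num [Fin.sum_univ_two]

lemma prod_ite_zero' {ι : Type*} [Fintype ι] (p : ι → Prop) [DecidablePred p] (f : ι → ℂ) :
    ∏ k, (if p k then f k else 0) = if ∀ k, p k then ∏ k, f k else 0 := by
  split_ifs with h
  · exact Finset.prod_congr rfl fun k _ => if_pos (h k)
  · obtain ⟨k, hk⟩ := not_forall.mp h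
    exact Finset.prod_eq_zero (Finset.mem_univ k) (if_neg hk)

lemma fin2_add_cancel (x y : Fin 2) : x + (x + y) = y := by revert x y; decide

lemma fin2_eq_add_comm (x y z : Fin 2) : x = y + z ↔ y = x + z := by revert x y z; decide

lemma XaZb_entry (n : ℕ) (a b i j : Fin n → Fin 2) :
    XaZb n a b i j
      = if i = (fun k => j k + a k) then ∏ k, (-1:ℂ)^((b k : ℕ)*(j k : ℕ)) else 0 := by
  classical
  show (∏ k : Fin n, (Xg ^ (a k : ℕ) * Zg ^ (b k : ℕ)) (i k) (j k)) = _
  simp only [entry2]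
  rw [prod_ite_zero' (fun k => i k = j k + a k)]
  congr 1
  simp [funext_iff]

/-- Quantum one-time pad twirl (Eq. (1)): averaging a trace-one matrix over all
Pauli conjugations yields the maximally mixed state. -/
theorem qotp_twirl (n : ℕ) (hn : 1 ≤ n)
    (σ : Matrix (Fin n → Fin 2) (Fin n → Fin 2) ℂ) (hσ : σ.trace = 1) :
    (1 / (4 : ℂ) ^ n) • ∑ a : Fin n → Fin 2, ∑ b : Fin n → Fin 2,
        XaZb n a b * σ * (XaZb n a b)ᴴ
      = (1 / (2 : ℂ) ^ n) • (1 : Matrix (Fin n → Fin 2) (Fin n → Fin 2) ℂ) := by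
  classical
  ext i j
  simp only [Matrix.smul_apply, Matrix.sum_apply, Matrix.one_apply, smul_eq_mul]
  have key : ∀ a b : Fin n → Fin 2,
      (XaZb n a b * σ * (XaZb n a b)ᴴ) i j
        = (∏ k, (-1:ℂ)^((b k : ℕ)*((i k + a k : Fin 2) : ℕ)))
          * (∏ k, (-1:ℂ)^((b k : ℕ)*((j k + a k : Fin 2) : ℕ)))
          * σ (fun k => i k + a k) (fun k => j k + a k) := by
    intro a b
    rw [Matrix.mul_apply]
    have hXrow : ∀ p q, (XaZb n a b) p q
        = if q = (fun k => p k + a k) then ∏ k, (-1:ℂ)^((b k : ℕ)*(q k : ℕ)) else 0 := by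
      intro p q
      rw [XaZb_entry]
      congr 1
      simp only [funext_iff, eq_iff_iff]
      constructor <;> intro h k <;> exact (fin2_eq_add_comm _ _ _).mp (h k)
    have hmul : ∀ q, (XaZb n a b * σ) i q
        = (∏ k, (-1:ℂ)^((b k : ℕ)*((i k + a k : Fin 2) : ℕ))) * σ (fun k => i k + a k) q := by
      intro q
      rw [Matrix.mul_apply]
      rw [Finset.sum_congr rfl (fun p _ => by rw [hXrow i p])]
      simp [Finset.sum_ite_eq']
    have hstar : ∀ q : Fin n → Fin 2,
        star (if q = (fun k => j k + a k) then ∏ k, (-1:ℂ)^((b k : ℕ)*(q k : ℕ)) else 0)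
          = if q = (fun k => j k + a k) then ∏ k, (-1:ℂ)^((b k : ℕ)*(q k : ℕ)) else 0 := by
      intro q
      split_ifs <;> simp [star_prod]
    simp only [hmul, Matrix.conjTranspose_apply, hXrow j, hstar]
    rw [Finset.sum_congr rfl (fun q _ => by rw [mul_ite, mul_zero])]
    rw [Finset.sum_ite_eq' Finset.univ (fun k => j k + a k)]
    simp [mul_assoc, mul_comm, mul_left_comm]
  simp only [key]
  have hb : ∀ a : Fin n → Fin 2,
      ∑ b : Fin n → Fin 2, ((∏ k, (-1:ℂ)^((b k : ℕ)*((i k + a k : Fin 2) : ℕ)))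
          * (∏ k, (-1:ℂ)^((b k : ℕ)*((j k + a k : Fin 2) : ℕ)))
          * σ (fun k => i k + a k) (fun k => j k + a k))
        = (if i = j then (2:ℂ)^n else 0) * σ (fun k => i k + a k) (fun k => j k + a k) := by
    intro a
    rw [← Finset.sum_mul]
    congr 1
    have hprod : ∀ b : Fin n → Fin 2,
        (∏ k, (-1:ℂ)^((b k : ℕ)*((i k + a k : Fin 2) : ℕ)))
          * (∏ k, (-1:ℂ)^((b k : ℕ)*((j k + a k : Fin 2) : ℕ)))
        = ∏ k, ((-1:ℂ)^((b k : ℕ)*((i k + a k : Fin 2) : ℕ))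
            * (-1:ℂ)^((b k : ℕ)*((j k + a k : Fin 2) : ℕ))) := fun b =>
      (Finset.prod_mul_distrib).symm
    simp only [hprod]
    rw [← Fintype.piFinset_univ, ← Finset.prod_univ_sum (fun _ : Fin n => (Finset.univ : Finset (Fin 2)))
      (fun k c => (-1:ℂ)^((c:ℕ)*((i k + a k : Fin 2) : ℕ)) * (-1)^((c:ℕ)*((j k + a k : Fin 2) : ℕ)))]
    simp only [fac]
    rw [prod_ite_zero' (fun k => (i k + a k : Fin 2) = j k + a k)]
    have hiff : (∀ k, (i k + a k : Fin 2) = j k + a k) ↔ i = j := by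
      rw [funext_iff]
      refine forall_congr' fun k => ⟨fun h => add_right_cancel h, fun h => by rw [h]⟩
    simp only [hiff]
    simp [Finset.prod_const, Finset.card_univ]
  simp only [hb]
  by_cases hij : i = j
  · subst hij
    simp only [if_pos rfl]
    rw [← Finset.mul_sum]
    have htr : ∑ x : Fin n → Fin 2, σ (fun k => i k + x k) (fun k => i k + x k)
        = ∑ p : Fin n → Fin 2, σ p p :=
      Fintype.sum_bijective (fun x => fun k => i k + x k)
        (Function.Involutive.bijective fun x => funext fun k => fin2_add_cancel _ _)
        _ _ fun x => rfl
    have htr2 : (∑ p : Fin n → Fin 2, σ p p) = 1 := by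
      rw [← hσ]; rfl
    rw [htr, htr2]
    have h2 : (2:ℂ)^n ≠ 0 := pow_ne_zero n two_ne_zero
    have h4 : (4:ℂ)^n = 2^n * 2^n := by rw [← mul_pow]; norm_num
    rw [h4]
    field_simp
    simp
  · simp [hij]
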